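/- Let p be an odd prime, k a natural number, and q = p^(2^k). If α is a generator of a Sylow 2-subgroup of the multiplicative group F_q^*, then the elements 1, α, α², …, α^(2^k − 1) form a basis of F_q as a vector space over its prime subfield F_p. -/

import Mathlib

open IntermediateField Module

theorem stmt1 {p k : ℕ} (hp : p.Prime) (hodd : Odd p)
    {F : Type*} [Field F] [Fintype F] [Algebra (ZMod p) F]
    (hF : Fintype.card F = p ^ (2 ^ k))
    (P : Sylow 2 Fˣ) (α : Fˣ) (hα : Subgroup.zpowers α = (P : Subgroup Fˣ)) :
    LinearIndependent (ZMod p) (fun i : Fin (2 ^ k) => (α : F) ^ (i : ℕ)) ∧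
      Submodule.span (ZMod p) (Set.range fun i : Fin (2 ^ k) => (α : F) ^ (i : ℕ)) = ⊤ := by
  have : Fact p.Prime := ⟨hp⟩
  set a : F := (α : F) with ha_def
  have hrank : Module.finrank (ZMod p) F = 2 ^ k := by
    have h := card_eq_pow_finrank (K := ZMod p) (V := F)
    rw [ZMod.card, hF] at h
    exact (Nat.pow_right_injective hp.two_le h.symm)
  -- order of α
  haveI : DecidableEq F := Classical.decEq F
  have hord : orderOf α = 2 ^ ((p ^ (2 ^ k) - 1).factorization 2) := by
    rw [← Nat.card_zpowers, hα, Sylow.card_eq_multiplicity,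
      Nat.card_eq_fintype_card, Fintype.card_units, hF]
  have htop : IntermediateField.adjoin (ZMod p) {a} = ⊤ := by
    by_contra hne
    set E := IntermediateField.adjoin (ZMod p) {a} with hE
    haveI : Fintype E := Fintype.ofFinite E
    have hd_dvd : Module.finrank (ZMod p) E ∣ 2 ^ k := by
      rw [← hrank, ← Module.finrank_mul_finrank (ZMod p) E F]
      exact Dvd.intro _ rfl
    have hd_ne : Module.finrank (ZMod p) E ≠ 2 ^ k := by
      intro h
      apply hne
      have h2 : Module.finrank (ZMod p) (Subalgebra.toSubmodule E.toSubalgebra) =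
          Module.finrank (ZMod p) F := by
        rw [hrank, ← h]
        exact Subalgebra.finrank_toSubmodule E.toSubalgebra
      have h3 := Submodule.eq_top_of_finrank_eq h2
      have h4 : E.toSubalgebra = ⊤ := Algebra.toSubmodule_eq_top.mp h3
      exact IntermediateField.toSubalgebra_injective
        (by rw [h4, IntermediateField.top_toSubalgebra])
    obtain ⟨j, hj, hdj⟩ := (Nat.dvd_prime_pow Nat.prime_two).mp hd_dvd
    have hjk : j < k := lt_of_le_of_ne hj (fun h => hd_ne (by rw [hdj, h]))
    have hk1 : 1 ≤ k := lt_of_le_of_lt (Nat.zero_le j) hjk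
    set m := 2 ^ (k - 1) with hm
    have hdm : 2 ^ j ∣ m := pow_dvd_pow 2 (by omega)
    set t := p ^ m with ht
    have htge : 3 ≤ t := by
      calc 3 ≤ p := hp.two_le.lt_of_ne (by rintro rfl; exact (Nat.not_odd_iff_even.mpr even_two) hodd)
      _ ≤ p ^ m := Nat.le_self_pow (by positivity) p
    have ht_odd : Odd t := hodd.pow
    -- a ^ (p ^ d - 1) = 1
    have haE : a ∈ E := IntermediateField.mem_adjoin_simple_self (ZMod p) a
    have hE_card : Fintype.card E = p ^ 2 ^ j := by
      have h := card_eq_pow_finrank (K := ZMod p) (V := E)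
      rw [ZMod.card] at h
      rw [h, hdj]
    have h1 : (⟨a, haE⟩ : E) ^ (p ^ 2 ^ j - 1) = 1 := by
      rw [← hE_card]
      exact FiniteField.pow_card_sub_one_eq_one _ (by
        simp only [ne_eq, Subtype.ext_iff, ZeroMemClass.coe_zero]
        exact α.ne_zero)
    have h2 : a ^ (p ^ 2 ^ j - 1) = 1 := by
      have := congrArg Subtype.val h1
      push_cast at this
      exact this
    have h3 : α ^ (p ^ 2 ^ j - 1) = 1 := Units.ext (by push_cast [h2]; exact h2)
    have h4 : orderOf α ∣ p ^ 2 ^ j - 1 := orderOf_dvd_of_pow_eq_one h3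
    have h5 : p ^ 2 ^ j - 1 ∣ t - 1 := by
      obtain ⟨c, hc⟩ := hdm
      rw [ht, hc, pow_mul]
      simpa using Nat.sub_dvd_pow_sub_pow (p ^ 2 ^ j) 1 c
    have h6 : 2 ^ ((p ^ 2 ^ k - 1).factorization 2) ∣ t - 1 := hord ▸ h4.trans h5
    have h7 : (p ^ 2 ^ k - 1).factorization 2 ≤ (t - 1).factorization 2 :=
      (Nat.Prime.pow_dvd_iff_le_factorization Nat.prime_two (by omega)).mp h6
    -- p ^ 2 ^ k - 1 = (t - 1) * (t + 1)
    have hfact : p ^ 2 ^ k - 1 = (t - 1) * (t + 1) := by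
      have h2m : 2 ^ k = m * 2 := by
        rw [hm, ← pow_succ]
        congr 1
        omega
      rw [h2m, pow_mul, ← ht]
      calc t ^ 2 - 1 = t ^ 2 - 1 ^ 2 := by norm_num
        _ = (t + 1) * (t - 1) := Nat.sq_sub_sq t 1
        _ = (t - 1) * (t + 1) := mul_comm _ _
    have heven : 2 ∣ t + 1 := ht_odd.add_one.two_dvd
    have h8 : (p ^ 2 ^ k - 1).factorization 2 =
        (t - 1).factorization 2 + (t + 1).factorization 2 := by
      rw [hfact, Nat.factorization_mul (by omega) (by omega)]
      rfl
    have h9 : 1 ≤ (t + 1).factorization 2 :=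
      (Nat.Prime.factorization_pos_of_dvd Nat.prime_two (by omega) heven)
    omega
  -- now build the power basis
  have hint : IsIntegral (ZMod p) a := IsIntegral.of_finite _ _
  let pb := IntermediateField.adjoin.powerBasis hint
  let e : (ZMod p)⟮a⟯ ≃ₐ[ZMod p] F :=
    (IntermediateField.equivOfEq htop).trans IntermediateField.topEquiv
  let pb' := pb.map e
  have hdim : pb'.dim = 2 ^ k := by rw [← hrank, pb'.finrank]
  have hgen : pb'.gen = a := rfl
  let b := pb'.basis.reindex (finCongr hdim)
  have hfun : (fun i : Fin (2 ^ k) => a ^ (i : ℕ)) = ⇑b := by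
    funext i
    rw [Basis.reindex_apply, pb'.coe_basis, hgen]
    simp
  constructor
  · rw [show (fun i : Fin (2 ^ k) => (α : F) ^ (i : ℕ)) = ⇑b from hfun]
    exact b.linearIndependent
  · rw [show (fun i : Fin (2 ^ k) => (α : F) ^ (i : ℕ)) = ⇑b from hfun]
    exact b.span_eq
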